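/- arXiv:1601.00553 — 3 statements merged into one kernel-verified Lean document; each statement's English description precedes it below -/
import Mathlib

section
/- Let k be an integral domain, W a set, V = W →₀ k the free k-module with basis W, and Π a simple term-rewriting system on V with respect to W. For every nonzero c ∈ k and all f, g ∈ V, one has f →*_Π g if and only if c·f →*_Π c·g, where →*_Π is the reflexive-transitive closure of the one-step rewriting relation →_Π. -/
/-- A term-rewriting system `Rw ⊆ W × (W →₀ k)` is simple if for every rule
`t → v`, the basis element `t` does not occur in the support of `v`. -/
def IsSimpleTRS {k W : Type*} [CommRing k] [IsDomain k]
    (Rw : W → (W →₀ k) → Prop) : Prop :=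
  ∀ t v, Rw t v → t ∉ v.support

/-- One-step rewriting: `f →_Π g` if there is a rule `t → v` such that the
coefficient of `t` in `f` is nonzero and `g = f - (f t)·t + (f t)·v`. -/
def OneStep {k W : Type*} [CommRing k] [IsDomain k]
    (Rw : W → (W →₀ k) → Prop) (f g : W →₀ k) : Prop :=
  ∃ t v, Rw t v ∧ f t ≠ 0 ∧ g = f - Finsupp.single t (f t) + f t • v

lemma oneStep_smul {k W : Type*} [CommRing k] [IsDomain k]
    {Rw : W → (W →₀ k) → Prop} {c : k} (hc : c ≠ 0) {f g : W →₀ k}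
    (h : OneStep Rw f g) : OneStep Rw (c • f) (c • g) := by
  obtain ⟨t, v, hrw, hft, rfl⟩ := h
  refine ⟨t, v, hrw, ?_, ?_⟩
  · simpa using mul_ne_zero hc hft
  · ext x
    simp only [Finsupp.add_apply, Finsupp.sub_apply, Finsupp.smul_apply,
      Finsupp.single_apply, smul_eq_mul]
    by_cases hx : t = x <;> simp [hx] <;> ring

lemma oneStep_smul_rev {k W : Type*} [CommRing k] [IsDomain k]
    {Rw : W → (W →₀ k) → Prop} {c : k} (hc : c ≠ 0) {f h : W →₀ k}
    (hs : OneStep Rw (c • f) h) : ∃ g, OneStep Rw f g ∧ h = c • g := by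
  obtain ⟨t, v, hrw, hft, rfl⟩ := hs
  have hft' : f t ≠ 0 := by
    intro h0; apply hft; simp [h0]
  refine ⟨f - Finsupp.single t (f t) + f t • v, ⟨t, v, hrw, hft', rfl⟩, ?_⟩
  ext x
  simp only [Finsupp.add_apply, Finsupp.sub_apply, Finsupp.smul_apply,
    Finsupp.single_apply, smul_eq_mul]
  by_cases hx : t = x <;> simp [hx] <;> ring

lemma smul_cancel {k W : Type*} [CommRing k] [IsDomain k]
    {c : k} (hc : c ≠ 0) {f g : W →₀ k} (h : c • f = c • g) : f = g := by
  ext x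
  have := congrArg (fun p => p x) h
  simp only [Finsupp.smul_apply, smul_eq_mul] at this
  exact mul_left_cancel₀ hc this

/-- For a simple term-rewriting system and nonzero `c`:
`f →*_Π g` iff `c·f →*_Π c·g`. -/
theorem reflTransGen_smul_iff {k W : Type*} [CommRing k] [IsDomain k]
    (Rw : W → (W →₀ k) → Prop) (hsimple : IsSimpleTRS Rw)
    (c : k) (hc : c ≠ 0) (f g : W →₀ k) :
    Relation.ReflTransGen (OneStep Rw) f g ↔
      Relation.ReflTransGen (OneStep Rw) (c • f) (c • g) := by
  constructor
  · intro h
    induction h with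
    | refl => exact .refl
    | tail _ hstep ih => exact ih.tail (oneStep_smul hc hstep)
  · intro h
    have key : ∀ x, Relation.ReflTransGen (OneStep Rw) x (c • g) →
        ∀ f, x = c • f → Relation.ReflTransGen (OneStep Rw) f g := by
      intro x hx
      induction hx using Relation.ReflTransGen.head_induction_on with
      | refl => intro f hf; rw [smul_cancel hc hf.symm]
      | head hstep _ ih =>
        intro f hf
        subst hf
        obtain ⟨g', hg', rfl⟩ := oneStep_smul_rev hc hstep
        exact Relation.ReflTransGen.head hg' (ih g' rfl)
    exact key _ h f rfl
end

section
/- Let k be an integral domain, W a set, V = W →₀ k the free k-module with basis W, Π a simple term-rewriting system on V with respect to W, and ≤ a linear order on W compatible with Π. Fix w ∈ W, set Y = {y ∈ W : y < w}, and let Π_{kY} = {(t, v) ∈ Π : t ∈ Y and Supp(v) ⊆ Y}. If f, g ∈ V satisfy Supp(f) ⊆ Y and Supp(g) ⊆ Y, then f →*_Π g implies f →*_{Π_{kY}} g. -/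
lemma onestep_aux {k W : Type*} [CommRing k] [IsDomain k] [LinearOrder W]
    (Rw : W → (W →₀ k) → Prop) (hsimple : IsSimpleTRS Rw)
    (hcompat : ∀ t v, Rw t v → ∀ s ∈ v.support, s < t)
    (w : W) {f b : W →₀ k}
    (hf : ∀ s ∈ f.support, s < w) (hstep : OneStep Rw f b) :
    (∀ s ∈ b.support, s < w) ∧
      OneStep (fun t v => Rw t v ∧ t < w ∧ ∀ s ∈ v.support, s < w) f b := by
  obtain ⟨t, v, hrw, hft, hb⟩ := hstep
  have htw : t < w := hf t (Finsupp.mem_support_iff.mpr hft)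
  have hvw : ∀ s ∈ v.support, s < w := fun s hs => (hcompat t v hrw s hs).trans htw
  refine ⟨?_, t, v, ⟨hrw, htw, hvw⟩, hft, hb⟩
  intro s hs
  rw [Finsupp.mem_support_iff] at hs
  by_cases hst : s = t
  · subst hst
    exfalso
    apply hs
    have hvt : v s = 0 := Finsupp.notMem_support_iff.mp (hsimple s v hrw)
    simp [hb, hvt]
  · have hbs : b s = f s + f t * v s := by
      simp [hb, Finsupp.single_apply, Ne.symm hst]
    rw [hbs] at hs
    rcases eq_or_ne (f s) 0 with hfs | hfs
    · have : v s ≠ 0 := by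
        intro h0; apply hs; simp [hfs, h0]
      exact hvw s (Finsupp.mem_support_iff.mpr this)
    · exact hf s (Finsupp.mem_support_iff.mpr hfs)

/-- Let `≤` be a linear order on `W` compatible with the simple term-rewriting
system `Π`, `w ∈ W`, `Y = {y : y < w}`, and `Π_{kY}` the restriction of `Π` to
rules `t → v` with `t ∈ Y` and `Supp(v) ⊆ Y`. If `Supp(f) ⊆ Y`, `Supp(g) ⊆ Y`
and `f →*_Π g`, then `f →*_{Π_{kY}} g`. -/
theorem reflTransGen_restrict {k W : Type*} [CommRing k] [IsDomain k]
    [LinearOrder W]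
    (Rw : W → (W →₀ k) → Prop) (hsimple : IsSimpleTRS Rw)
    (hcompat : ∀ t v, Rw t v → ∀ s ∈ v.support, s < t)
    (w : W) (f g : W →₀ k)
    (hf : ∀ s ∈ f.support, s < w) (hg : ∀ s ∈ g.support, s < w)
    (h : Relation.ReflTransGen (OneStep Rw) f g) :
    Relation.ReflTransGen
      (OneStep (fun t v => Rw t v ∧ t < w ∧ ∀ s ∈ v.support, s < w)) f g := by
  induction h using Relation.ReflTransGen.head_induction_on with
  | refl => exact Relation.ReflTransGen.refl
  | head hstep _ ih =>
      obtain ⟨hb, hstep'⟩ := onestep_aux Rw hsimple hcompat w hf hstep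
      exact Relation.ReflTransGen.head hstep' (ih hb)
end

section
/- Let k be an integral domain, W a set, V = W →₀ k the free k-module with basis W, and Π a simple terminating term-rewriting system on V with respect to W, compatible with a well-order ≤ on W. If every basis element w ∈ W (regarded as the element 1·w of V) is locally confluent, then Π is locally base-confluent: for every nonzero c ∈ k and every pair of rewriting rules w → v₁, w → v₂ ∈ Π with the same left-hand side w, one has c·v₁ − c·v₂ →*_Π 0. -/
/-- `f` and `g` are joinable: both rewrite to a common element. -/
def Joinable {k W : Type*} [CommRing k] [IsDomain k]
    (Rw : W → (W →₀ k) → Prop) (f g : W →₀ k) : Prop :=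
  ∃ u, Relation.ReflTransGen (OneStep Rw) f u ∧
    Relation.ReflTransGen (OneStep Rw) g u

section Aux

variable {k W : Type*} [CommRing k] [IsDomain k] [LinearOrder W] [WellFoundedLT W]

variable (Rw : W → (W →₀ k) → Prop)

/-- `x` is a finite sum of rule elements `c • (single s 1 - v)` with `Rw s v`
and `s < t`. -/
inductive RS (t : W) : (W →₀ k) → Prop
  | zero : RS t 0
  | add (c : k) (s : W) (v x : W →₀ k) :
      s < t → Rw s v → RS t x → RS t (c • (Finsupp.single s 1 - v) + x)

variable {Rw}

lemma rs_single {t s : W} {c : k} {v : W →₀ k} (hs : s < t) (hr : Rw s v) :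
    RS Rw t (c • (Finsupp.single s 1 - v)) := by
  simpa using RS.add c s v 0 hs hr RS.zero

lemma rs_add {t : W} {x y : W →₀ k} (hx : RS Rw t x) (hy : RS Rw t y) :
    RS Rw t (x + y) := by
  induction hx with
  | zero => simpa
  | add c s v x hs hr hx ih =>
      rw [add_assoc]; exact RS.add c s v _ hs hr ih

lemma rs_smul {t : W} {x : W →₀ k} (c : k) (hx : RS Rw t x) : RS Rw t (c • x) := by
  induction hx with
  | zero => rw [smul_zero]; exact RS.zero
  | add c' s v x hs hr hx ih =>
      rw [smul_add, smul_smul]; exact RS.add _ s v _ hs hr ih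

lemma rs_neg {t : W} {x : W →₀ k} (hx : RS Rw t x) : RS Rw t (-x) := by
  simpa using rs_smul (-1) hx

lemma rs_sub {t : W} {x y : W →₀ k} (hx : RS Rw t x) (hy : RS Rw t y) :
    RS Rw t (x - y) := by
  rw [sub_eq_add_neg]; exact rs_add hx (rs_neg hy)

lemma rs_mono {t t' : W} {x : W →₀ k} (h : t ≤ t') (hx : RS Rw t x) :
    RS Rw t' x := by
  induction hx with
  | zero => exact RS.zero
  | add c s v x hs hr hx ih => exact RS.add c s v x (lt_of_lt_of_le hs h) hr ih

variable (hcompat : ∀ t v, Rw t v → ∀ s ∈ v.support, s < t)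

include hcompat

lemma compat_apply {s s' : W} {v : W →₀ k} (hr : Rw s v) (h : s ≤ s') :
    v s' = 0 := by
  by_contra h0
  exact absurd (hcompat s v hr s' (Finsupp.mem_support_iff.2 h0)) (not_lt.2 h)

lemma rs_apply {t s : W} {x : W →₀ k} (hx : RS Rw t x) (h : t ≤ s) :
    x s = 0 := by
  induction hx with
  | zero => simp
  | add c s' v x hs' hr hx ih =>
      have h1 : s' ≠ s := ne_of_lt (lt_of_lt_of_le hs' h)
      have h2 : v s = 0 := compat_apply hcompat hr (le_of_lt (lt_of_lt_of_le hs' h))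
      simp [Finsupp.single_apply, h1, h2, ih]

/-- supports stay below `t`, and one step contributes a rule element. -/
lemma step_diff {t : W} {a b : W →₀ k} (ha : ∀ s ∈ a.support, s < t)
    (hab : OneStep Rw a b) :
    RS Rw t (a - b) ∧ ∀ s ∈ b.support, s < t := by
  obtain ⟨s, v, hr, hne, heq⟩ := hab
  have hst : s < t := ha s (Finsupp.mem_support_iff.2 hne)
  constructor
  · have : a - b = (a s) • (Finsupp.single s 1 - v) := by
      rw [heq]
      rw [smul_sub, Finsupp.smul_single' (a s) s 1, mul_one]
      abel
    rw [this]
    exact rs_single hst hr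
  · intro s' hs'
    by_contra hlt
    have h1 : a s' = 0 := by
      by_contra h0
      exact hlt (ha s' (Finsupp.mem_support_iff.2 h0))
    have h2 : v s' = 0 :=
      compat_apply hcompat hr (le_of_lt (lt_of_lt_of_le hst (not_lt.1 hlt)))
    have h3 : s ≠ s' := by
      intro h; exact hlt (h ▸ hst)
    have : b s' = 0 := by
      rw [heq]
      simp [Finsupp.single_apply, h1, h2, h3]
    exact Finsupp.mem_support_iff.1 hs' this

lemma steps_diff {t : W} {a b : W →₀ k} (ha : ∀ s ∈ a.support, s < t)
    (hab : Relation.ReflTransGen (OneStep Rw) a b) :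
    RS Rw t (a - b) := by
  induction hab with
  | refl => simpa using RS.zero
  | tail h1 h2 ih =>
      rename_i m c
      have hm : ∀ s ∈ m.support, s < t := by
        clear h2 ih
        induction h1 with
        | refl => exact ha
        | tail h1' h2' ih' => exact (step_diff hcompat ih' h2').2
      have := step_diff hcompat hm h2
      have : RS Rw t ((a - m) + (m - c)) := rs_add ih this.1
      simpa using this

variable (hbasis : ∀ w : W, ∀ g h : W →₀ k, OneStep Rw (Finsupp.single w 1) g →
    OneStep Rw (Finsupp.single w 1) h → Joinable Rw g h)

include hbasis

/-- From two rules with the same left-hand side `s`, the difference of the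
right-hand sides is a sum of rule elements with tops `< s`. -/
lemma rs_rule_diff {s : W} {v v' : W →₀ k} (hr : Rw s v) (hr' : Rw s v') :
    RS Rw s (v - v') := by
  have hstep : ∀ u : W →₀ k, Rw s u → OneStep Rw (Finsupp.single s 1) u := by
    intro u hu
    refine ⟨s, u, hu, by simp, ?_⟩
    simp [Finsupp.single_eq_same]
  obtain ⟨u, h1, h2⟩ := hbasis s v v' (hstep v hr) (hstep v' hr')
  have hv : ∀ s' ∈ v.support, s' < s := hcompat s v hr
  have hv' : ∀ s' ∈ v'.support, s' < s := hcompat s v' hr'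
  have d1 := steps_diff hcompat hv h1
  have d2 := steps_diff hcompat hv' h2
  have : RS Rw s ((v - u) - (v' - u)) := rs_sub d1 d2
  simpa using this

/-- Decomposition: a nonzero rule sum can be written with a distinguished
maximal top. -/
lemma rs_decomp {t : W} {x : W →₀ k} (hx : RS Rw t x) :
    x = 0 ∨ ∃ m, m < t ∧ ∃ (c : k) (vb y : W →₀ k), Rw m vb ∧ RS Rw m y ∧
      x = c • (Finsupp.single m 1 - vb) + y := by
  induction hx with
  | zero => exact Or.inl rfl
  | add c s v x hs hr hx ih =>
      right
      rcases ih with rfl | ⟨m, hm, c', vb, y, hrv, hy, rfl⟩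
      · exact ⟨s, hs, c, v, 0, hr, RS.zero, by simp⟩
      · rcases lt_trichotomy s m with hsm | hsm | hsm
        · refine ⟨m, hm, c', vb, c • (Finsupp.single s 1 - v) + y, hrv,
            RS.add c s v y hsm hr hy, ?_⟩
          abel
        · subst hsm
          refine ⟨s, hs, c + c', v, c' • (v - vb) + y, hr, ?_, ?_⟩
          · exact rs_add (rs_smul c' (rs_rule_diff hcompat hbasis hr hrv)) hy
          · module
        · refine ⟨s, hs, c, v, c' • (Finsupp.single m 1 - vb) + y, hr,
            RS.add c' m vb y hsm hrv (rs_mono (le_of_lt hsm) hy), ?_⟩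
          abel

/-- Every rule sum reduces to zero. -/
lemma rs_to_zero : ∀ t : W, ∀ x : W →₀ k, RS Rw t x →
    Relation.ReflTransGen (OneStep Rw) x 0 := by
  intro t
  induction t using WellFoundedLT.induction with
  | _ t IH =>
    intro x hx
    rcases rs_decomp hcompat hbasis hx with rfl | ⟨m, hm, c, vb, y, hrv, hy, rfl⟩
    · exact Relation.ReflTransGen.refl
    · set x := c • (Finsupp.single m 1 - vb) + y with hxdef
      have hym : y m = 0 := rs_apply hcompat hy le_rfl
      have hvbm : vb m = 0 := compat_apply hcompat hrv le_rfl
      have hxm : x m = c := by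
        simp [hxdef, Finsupp.single_eq_same, hvbm, hym]
      by_cases hc : c = 0
      · have : x = y := by simp [hxdef, hc]
        rw [this]
        exact IH m hm y hy
      · have hstep : OneStep Rw x y := by
          refine ⟨m, vb, hrv, by rw [hxm]; exact hc, ?_⟩
          rw [hxm]
          have : Finsupp.single m c = c • Finsupp.single m (1 : k) := by
            rw [Finsupp.smul_single' c m 1, mul_one]
          rw [this, hxdef]
          module
        exact Relation.ReflTransGen.head hstep (IH m hm y hy)

/-- reductions are stable under scaling by a nonzero constant. -/
lemma steps_smul {c : k} (hc : c ≠ 0) {a b : W →₀ k}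
    (h : Relation.ReflTransGen (OneStep Rw) a b) :
    Relation.ReflTransGen (OneStep Rw) (c • a) (c • b) := by
  clear hcompat hbasis
  induction h with
  | refl => exact Relation.ReflTransGen.refl
  | tail h1 h2 ih =>
      rename_i m b
      refine Relation.ReflTransGen.tail ih ?_
      obtain ⟨s, v, hr, hne, heq⟩ := h2
      refine ⟨s, v, hr, ?_, ?_⟩
      · simp only [Finsupp.smul_apply, smul_eq_mul]
        exact mul_ne_zero hc hne
      · rw [heq]
        simp only [Finsupp.smul_apply, smul_eq_mul]
        rw [smul_add, smul_sub, ← Finsupp.smul_single' c s (m s), mul_smul]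

end Aux

/-- Let `Π` be a simple terminating term-rewriting system compatible with a
well-order on `W`. If every basis element `w ∈ W` (i.e. `1·w ∈ V`) is locally
confluent, then `Π` is locally base-confluent: for every nonzero `c ∈ k` and
rules `w → v₁`, `w → v₂` in `Π`, one has `c·v₁ − c·v₂ →*_Π 0`. -/
theorem basis_locally_confluent_implies_base_confluent
    {k W : Type*} [CommRing k] [IsDomain k]
    [LinearOrder W] [WellFoundedLT W]
    (Rw : W → (W →₀ k) → Prop) (hsimple : IsSimpleTRS Rw)
    (hterm : ¬ ∃ F : ℕ → (W →₀ k), ∀ n, OneStep Rw (F n) (F (n + 1)))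
    (hcompat : ∀ t v, Rw t v → ∀ s ∈ v.support, s < t)
    (hbasis : ∀ w : W, ∀ g h : W →₀ k, OneStep Rw (Finsupp.single w 1) g →
        OneStep Rw (Finsupp.single w 1) h → Joinable Rw g h) :
    ∀ c : k, c ≠ 0 → ∀ (w : W) (v₁ v₂ : W →₀ k), Rw w v₁ → Rw w v₂ →
      Relation.ReflTransGen (OneStep Rw) (c • v₁ - c • v₂) 0 := by
  intro c hc w v₁ v₂ h1 h2
  have hd : RS Rw w (v₁ - v₂) := rs_rule_diff hcompat hbasis h1 h2
  have : RS Rw w (c • (v₁ - v₂)) := rs_smul c hd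
  rw [smul_sub] at this
  exact rs_to_zero hcompat hbasis w _ this
end
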